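/- Let ω ∈ ℝ, T ≥ 0, and a, b ∈ ℝ. Define γ_1(t) = sin(ω·t + a) and γ_2(t) = sin(ω·t + b) on [0,T]. Let S_{(1,2)} = ∫_0^T ∫_0^{t_2} γ̇_1(t_1) γ̇_2(t_2) dt_1 dt_2 and S_{(2,1)} = ∫_0^T ∫_0^{t_2} γ̇_2(t_1) γ̇_1(t_2) dt_1 dt_2 be the level-two iterated integrals, and let L_{12} = (1/2)(S_{(1,2)} − S_{(2,1)}) be the lead-matrix entry. Then L_{12} = (sin(a − b)/2) · (ωT − sin(ωT)). -/

import Mathlib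

open intervalIntegral Real

/-- Steady-state lead matrix of the sinusoid: for the paths `γ₁(t) = sin(ωt + a)` and
`γ₂(t) = sin(ωt + b)` on `[0,T]`, the lead-matrix entry
`L₁₂ = (1/2)(S_{(1,2)} − S_{(2,1)})`, where
`S_{(i,j)} = ∫_0^T ∫_0^{t₂} γ̇_i(t₁) γ̇_j(t₂) dt₁ dt₂`, equals
`(sin(a − b)/2) (ωT − sin(ωT))`. -/
theorem lead_sin_steadyState (ω T a b : ℝ) (hT : 0 ≤ T) :
    (1 / 2 : ℝ) *
      ((∫ t2 in (0 : ℝ)..T, ∫ t1 in (0 : ℝ)..t2,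
          deriv (fun t => Real.sin (ω * t + a)) t1 * deriv (fun t => Real.sin (ω * t + b)) t2)
        - ∫ t2 in (0 : ℝ)..T, ∫ t1 in (0 : ℝ)..t2,
            deriv (fun t => Real.sin (ω * t + b)) t1 * deriv (fun t => Real.sin (ω * t + a)) t2)
      = (Real.sin (a - b) / 2) * (ω * T - Real.sin (ω * T)) := by
  have hderiv : ∀ (c t : ℝ), HasDerivAt (fun t => Real.sin (ω * t + c)) (ω * Real.cos (ω * t + c)) t := by
    intro c t
    have h1 : HasDerivAt (fun t : ℝ => ω * t + c) ω t := by
      simpa using ((hasDerivAt_id t).const_mul ω).add_const c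
    exact ((Real.hasDerivAt_sin (ω * t + c)).comp t h1).congr_deriv (mul_comm _ _)
  have hd : ∀ (c t : ℝ), deriv (fun t => Real.sin (ω * t + c)) t = ω * Real.cos (ω * t + c) :=
    fun c t => (hderiv c t).deriv
  have hint : ∀ (c x : ℝ), (∫ t in (0:ℝ)..x, ω * Real.cos (ω * t + c)) = Real.sin (ω * x + c) - Real.sin c := by
    intro c x
    have := intervalIntegral.integral_eq_sub_of_hasDerivAt (f := fun t => Real.sin (ω * t + c))
      (fun t _ => hderiv c t) (Continuous.intervalIntegrable (by fun_prop) 0 x)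
    simpa using this
  simp_rw [hd]
  have hin : ∀ (c d t2 : ℝ), (∫ t1 in (0:ℝ)..t2, ω * Real.cos (ω * t1 + c) * (ω * Real.cos (ω * t2 + d)))
      = (Real.sin (ω * t2 + c) - Real.sin c) * (ω * Real.cos (ω * t2 + d)) := by
    intro c d t2
    rw [intervalIntegral.integral_mul_const, hint]
  simp_rw [hin]
  rw [← intervalIntegral.integral_sub (Continuous.intervalIntegrable (by fun_prop) 0 T)
    (Continuous.intervalIntegrable (by fun_prop) 0 T)]
  have key : (∫ t in (0:ℝ)..T,
      ((Real.sin (ω * t + a) - Real.sin a) * (ω * Real.cos (ω * t + b))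
        - (Real.sin (ω * t + b) - Real.sin b) * (ω * Real.cos (ω * t + a))))
      = Real.sin (a - b) * (ω * T) + Real.sin b * (Real.sin (ω * T + a) - Real.sin a)
        - Real.sin a * (Real.sin (ω * T + b) - Real.sin b) := by
    have hF : ∀ t : ℝ, HasDerivAt
        (fun t => Real.sin (a - b) * (ω * t) + Real.sin b * Real.sin (ω * t + a)
          - Real.sin a * Real.sin (ω * t + b))
        ((Real.sin (ω * t + a) - Real.sin a) * (ω * Real.cos (ω * t + b))
          - (Real.sin (ω * t + b) - Real.sin b) * (ω * Real.cos (ω * t + a))) t := by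
      intro t
      have h1 : HasDerivAt (fun t : ℝ => Real.sin (a - b) * (ω * t)) (Real.sin (a - b) * ω) t := by
        simpa [mul_assoc] using ((hasDerivAt_id t).const_mul ω).const_mul (Real.sin (a - b))
      have h := ((h1.add ((hderiv a t).const_mul (Real.sin b))).sub ((hderiv b t).const_mul (Real.sin a)))
      refine h.congr_deriv (Eq.symm ?_)
      have e1 := Real.sin_add (ω * t) a
      have e2 := Real.sin_add (ω * t) b
      have e3 := Real.cos_add (ω * t) a
      have e4 := Real.cos_add (ω * t) b
      have e5 := Real.sin_sub a b
      have e6 := Real.sin_sq_add_cos_sq (ω * t)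
      rw [e1, e2, e3, e4, e5]
      linear_combination (ω * Real.sin a * Real.cos b - ω * Real.cos a * Real.sin b) * e6
    rw [intervalIntegral.integral_eq_sub_of_hasDerivAt (fun t _ => hF t)
      (Continuous.intervalIntegrable (by fun_prop) 0 T)]
    simp
    ring
  rw [key]
  have e1 := Real.sin_add (ω * T) a
  have e2 := Real.sin_add (ω * T) b
  have e5 := Real.sin_sub a b
  rw [e1, e2, e5]; ring
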